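/- Let α₀, α₁, β₁, β₂ ∈ ℝ with β₁ > 0 and β₂ > 0, let τ₁, τ₂ ∈ ℝ, and let ω > 0. If χ(iω) = 0, i.e. −ω² + iα₁ω + α₀ + β₁·exp(−iωτ₁) + β₂·exp(−iωτ₂) = 0, then the 'triangle condition' (β₁ − β₂)² ≤ (ω² − α₀)² + α₁²ω² ≤ (β₁ + β₂)² holds. In particular, Hopf frequencies ω of the two-delay system are restricted to the set of ω for which the modulus √((ω² − α₀)² + α₁²ω²) lies between |β₁ − β₂| and β₁ + β₂. -/

import Mathlib

/-- The characteristic function `χ(λ) = λ² + α₁λ + α₀ + β₁·exp(−λτ₁) + β₂·exp(−λτ₂)`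
of the linearized two-delay glucose–insulin model. -/
noncomputable def chi (α₀ α₁ β₁ β₂ τ₁ τ₂ : ℝ) (lam : ℂ) : ℂ :=
  lam ^ 2 + (α₁ : ℂ) * lam + (α₀ : ℂ) + (β₁ : ℂ) * Complex.exp (-lam * (τ₁ : ℂ))
    + (β₂ : ℂ) * Complex.exp (-lam * (τ₂ : ℂ))

/-- If `χ(iω) = 0` for some `ω > 0`, `β₁, β₂ > 0`, then the triangle condition
`(β₁ − β₂)² ≤ (ω² − α₀)² + α₁²ω² ≤ (β₁ + β₂)² holds; equivalently, the modulus
`√((ω² − α₀)² + α₁²ω²)` lies between `|β₁ − β₂|` and `β₁ + β₂`. -/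
theorem stmt0 (α₀ α₁ β₁ β₂ τ₁ τ₂ ω : ℝ) (hβ₁ : 0 < β₁) (hβ₂ : 0 < β₂)
    (hω : 0 < ω) (hchi : chi α₀ α₁ β₁ β₂ τ₁ τ₂ (Complex.I * (ω : ℂ)) = 0) :
    ((β₁ - β₂) ^ 2 ≤ (ω ^ 2 - α₀) ^ 2 + α₁ ^ 2 * ω ^ 2 ∧
      (ω ^ 2 - α₀) ^ 2 + α₁ ^ 2 * ω ^ 2 ≤ (β₁ + β₂) ^ 2) ∧
    (|β₁ - β₂| ≤ Real.sqrt ((ω ^ 2 - α₀) ^ 2 + α₁ ^ 2 * ω ^ 2) ∧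
      Real.sqrt ((ω ^ 2 - α₀) ^ 2 + α₁ ^ 2 * ω ^ 2) ≤ β₁ + β₂) := by
  set e₁ : ℂ := Complex.exp (-(Complex.I * (ω : ℂ)) * (τ₁ : ℂ)) with he₁
  set e₂ : ℂ := Complex.exp (-(Complex.I * (ω : ℂ)) * (τ₂ : ℂ)) with he₂
  have habs₁ : ‖e₁‖ = 1 := by
    rw [he₁, Complex.norm_exp]
    simp
  have habs₂ : ‖e₂‖ = 1 := by
    rw [he₂, Complex.norm_exp]
    simp
  have hw : (β₁ : ℂ) * e₁ + (β₂ : ℂ) * e₂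
      = -(((α₀ - ω ^ 2 : ℝ) : ℂ) + ((α₁ * ω : ℝ) : ℂ) * Complex.I) := by
    have := hchi
    unfold chi at this
    push_cast
    push_cast at this
    linear_combination this - Complex.I_sq * (ω:ℂ)^2
  set w : ℂ := (β₁ : ℂ) * e₁ + (β₂ : ℂ) * e₂ with hwdef
  have hAw : ‖w‖ ^ 2 = (ω ^ 2 - α₀) ^ 2 + α₁ ^ 2 * ω ^ 2 := by
    rw [hw, norm_neg, Complex.sq_norm, Complex.normSq_apply]
    simp [Complex.add_re, Complex.add_im, ← Complex.ofReal_pow]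
    ring
  have hupper : ‖w‖ ≤ β₁ + β₂ := by
    calc ‖w‖ ≤ ‖(β₁:ℂ) * e₁‖ + ‖(β₂:ℂ) * e₂‖ :=
          norm_add_le _ _
      _ = β₁ + β₂ := by
          rw [norm_mul, norm_mul, habs₁, habs₂, Complex.norm_real, Complex.norm_real, Real.norm_eq_abs, Real.norm_eq_abs]
          rw [abs_of_pos hβ₁, abs_of_pos hβ₂]; ring
  have hlower : |β₁ - β₂| ≤ ‖w‖ := by
    have h := abs_norm_sub_norm_le ((β₁:ℂ) * e₁) (-((β₂:ℂ) * e₂))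
    rw [norm_neg, sub_neg_eq_add, norm_mul, norm_mul, habs₁, habs₂,
      Complex.norm_real, Complex.norm_real, Real.norm_eq_abs, Real.norm_eq_abs, abs_of_pos hβ₁, abs_of_pos hβ₂,
      mul_one, mul_one] at h
    exact h
  have hwnn : 0 ≤ ‖w‖ := norm_nonneg w
  have hsq : Real.sqrt ((ω ^ 2 - α₀) ^ 2 + α₁ ^ 2 * ω ^ 2) = ‖w‖ := by
    rw [← hAw, Real.sqrt_sq hwnn]
  refine ⟨⟨?_, ?_⟩, ⟨?_, ?_⟩⟩
  · rw [← hAw]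
    calc (β₁ - β₂) ^ 2 = |β₁ - β₂| ^ 2 := (sq_abs _).symm
      _ ≤ ‖w‖ ^ 2 := by gcongr
  · rw [← hAw]; gcongr
  · rw [hsq]; exact hlower
  · rw [hsq]; exact hupper
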